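/- arXiv:2304.02486 — 2 statements merged into one kernel-verified Lean document; each statement's English description precedes it below -/
import Mathlib

section
/- Let f be holomorphic in a neighborhood of the closed annulus {z : r₁ ≤ |z| ≤ r₂} with 0 < r₁ < r₂, not identically zero. Then the principal value contour integrals of f'/f over the circles |z| = r₂ and |z| = r₁ satisfy: (1/2πi)∮_{|z|=r₂} f'(z)/f(z) dz − (1/2πi)∮_{|z|=r₁} f'(z)/f(z) dz = N_open + (1/2)·N_boundary, where N_open is the number of zeros of f (with multiplicity) with r₁ < |z| < r₂ and N_boundary is the number of zeros (with multiplicity) on the two boundary circles. -/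
open Real MeasureTheory
open scoped Classical

private lemma prod_diff' (S : Multiset ℂ) :
    Differentiable ℂ (fun w : ℂ => (S.map (fun z0 => w - z0)).prod) := by
  induction S using Multiset.induction with
  | empty => simp
  | cons a S ih =>
    simp only [Multiset.map_cons, Multiset.prod_cons]
    exact (differentiable_id.sub_const a).mul ih

private lemma circleIntegral_add' {f g : ℂ → ℂ} {c : ℂ} {R : ℝ}
    (hf : CircleIntegrable f c R) (hg : CircleIntegrable g c R) :
    (∮ z in C(c, R), (f z + g z)) = (∮ z in C(c, R), f z) + ∮ z in C(c, R), g z := by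
  simp only [circleIntegral, smul_add, intervalIntegral.integral_add hf.out hg.out]

private lemma circleIntegral_congr_off_countable' {f g : ℂ → ℂ} {c : ℂ} {R : ℝ} (hR : 0 < R)
    {T : Set ℂ} (hT : T.Countable)
    (h : ∀ z ∈ Metric.sphere c R, z ∉ T → f z = g z) :
    (∮ z in C(c, R), f z) = ∮ z in C(c, R), g z := by
  have hcount : (circleMap c R ⁻¹' T).Countable := hT.preimage_circleMap c hR.ne'
  simp only [circleIntegral]
  refine intervalIntegral.integral_congr_ae ((hcount.ae_notMem volume).mono fun θ hθ _ => ?_)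
  have := h (circleMap c R θ) (circleMap_mem_sphere c hR.le θ) hθ
  rw [this]

private lemma key_induction' (r : ℝ) (hr : 0 < r) (U : Set ℂ) (hU : IsOpen U)
    (hsub : Metric.sphere (0:ℂ) r ⊆ U)
    (g : ℂ → ℂ) (hg : DifferentiableOn ℂ g U) (hgne : ∀ z ∈ U, g z ≠ 0)
    (S : Multiset ℂ) (hS : ∀ z0 ∈ S, ‖z0‖ ≠ r) :
    (∮ z in C(0, r),
        deriv (fun w => g w * (S.map (fun z0 => w - z0)).prod) z /
          (g z * (S.map (fun z0 => z - z0)).prod))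
      = (∮ z in C(0, r), deriv g z / g z)
        + (2 * Real.pi * Complex.I) * ((S.filter (fun z0 => ‖z0‖ < r)).card : ℂ) := by
  induction S using Multiset.induction with
  | empty => simp
  | cons a S ih =>
    have hSne : ∀ z0 ∈ S, ‖z0‖ ≠ r := fun z0 hz0 => hS z0 (Multiset.mem_cons_of_mem hz0)
    have haR : ‖a‖ ≠ r := hS a (Multiset.mem_cons_self a S)
    have hhd : DifferentiableOn ℂ (fun w => g w * (S.map (fun z0 => w - z0)).prod) U :=
      hg.mul ((prod_diff' S).differentiableOn)
    have hne : ∀ z ∈ Metric.sphere (0:ℂ) r, g z * (S.map (fun z0 => z - z0)).prod ≠ 0 := by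
      intro z hz
      have hzU : z ∈ U := hsub hz
      have habs : ‖z‖ = r := by
        simpa using mem_sphere_zero_iff_norm.1 hz
      refine mul_ne_zero (hgne z hzU) (Multiset.prod_ne_zero ?_)
      intro h0
      obtain ⟨z0, hz0, hzz⟩ := Multiset.mem_map.1 h0
      exact hSne z0 hz0 (by rw [← sub_eq_zero.1 hzz]; exact habs)
    have hEq : Set.EqOn
        (fun z => deriv (fun w => g w * ((a ::ₘ S).map (fun z0 => w - z0)).prod) z /
          (g z * ((a ::ₘ S).map (fun z0 => z - z0)).prod))
        (fun z => (z - a)⁻¹ +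
          deriv (fun w => g w * (S.map (fun z0 => w - z0)).prod) z /
            (g z * (S.map (fun z0 => z - z0)).prod)) (Metric.sphere (0:ℂ) r) := by
      intro z hz
      have hzU : z ∈ U := hsub hz
      have habs : ‖z‖ = r := by
        simpa using mem_sphere_zero_iff_norm.1 hz
      have hza : z - a ≠ 0 := sub_ne_zero.2 (fun hc => haR (hc ▸ habs))
      have hdh : DifferentiableAt ℂ (fun w => g w * (S.map (fun z0 => w - z0)).prod) z :=
        hhd.differentiableAt (hU.mem_nhds hzU)
      have h2 : g z * (S.map (fun z0 => z - z0)).prod ≠ 0 := hne z hz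
      have hfun : (fun w => g w * ((a ::ₘ S).map (fun z0 => w - z0)).prod)
          = fun w => (w - a) * (g w * (S.map (fun z0 => w - z0)).prod) := by
        funext w; simp only [Multiset.map_cons, Multiset.prod_cons]; ring
      simp only []
      rw [hfun, deriv_fun_mul (by fun_prop : DifferentiableAt ℂ (fun w : ℂ => w - a) z) hdh]
      have hd1 : deriv (fun w : ℂ => w - a) z = 1 := by
        simp
      rw [hd1, one_mul]
      have hden : g z * ((a ::ₘ S).map (fun z0 => z - z0)).prod
          = (z - a) * (g z * (S.map (fun z0 => z - z0)).prod) := by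
        simp only [Multiset.map_cons, Multiset.prod_cons]; ring
      rw [hden]
      field_simp [hza, (mul_ne_zero_iff.1 h2).1, (mul_ne_zero_iff.1 h2).2]
    rw [circleIntegral.integral_congr hr.le hEq]
    have hint1 : CircleIntegrable (fun z => (z - a)⁻¹) 0 r := by
      refine circleIntegrable_sub_inv_iff.2 (Or.inr ?_)
      intro hmem
      rw [mem_sphere_zero_iff_norm, abs_of_pos hr] at hmem
      exact haR hmem
    have hint2 : CircleIntegrable
        (fun z => deriv (fun w => g w * (S.map (fun z0 => w - z0)).prod) z /
          (g z * (S.map (fun z0 => z - z0)).prod)) 0 r := by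
      refine ContinuousOn.circleIntegrable hr.le ?_
      refine ContinuousOn.div ?_ ?_ hne
      · exact (((hhd.analyticOnNhd hU).deriv).continuousOn).mono hsub
      · exact (hhd.continuousOn).mono hsub
    rw [circleIntegral_add' hint1 hint2, ih hSne]
    rcases lt_or_gt_of_ne haR with hlt | hgt
    · rw [circleIntegral.integral_sub_inv_of_mem_ball
        (by simpa [mem_ball_zero_iff] using hlt)]
      rw [show Multiset.filter (fun z0 => ‖z0‖ < r) (a ::ₘ S)
          = a ::ₘ Multiset.filter (fun z0 => ‖z0‖ < r) S from
          Multiset.filter_cons_of_pos _ hlt, Multiset.card_cons]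
      push_cast
      ring
    · have h0 : (∮ z in C(0, r), (z - a)⁻¹) = (0:ℂ) := by
        have hdiff : ∀ z ∈ Metric.closedBall (0:ℂ) r, DifferentiableAt ℂ (fun w => (w - a)⁻¹) z := by
          intro z hz
          have hzr : ‖z‖ ≤ r := by
            simpa using mem_closedBall_zero_iff.1 hz
          have : z - a ≠ 0 := sub_ne_zero.2 (fun hc => absurd (hc ▸ hzr) (not_le.2 hgt))
          exact (differentiableAt_id.sub_const a).inv this
        refine Complex.circleIntegral_eq_zero_of_differentiable_on_off_countable hr.le
          Set.countable_empty (fun z hz => (hdiff z hz).continuousAt.continuousWithinAt) ?_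
        exact fun z hz => hdiff z (Metric.ball_subset_closedBall hz.1)
      rw [h0, show Multiset.filter (fun z0 => ‖z0‖ < r) (a ::ₘ S)
          = Multiset.filter (fun z0 => ‖z0‖ < r) S from
          Multiset.filter_cons_of_neg _ (not_lt.2 hgt.le)]
      ring

private lemma pv_integral_eq' (r : ℝ) (hr : 0 < r) (U : Set ℂ) (hU : IsOpen U)
    (hsub : Metric.sphere (0:ℂ) r ⊆ U)
    (f g : ℂ → ℂ) (Z : Multiset ℂ)
    (hfact : ∀ z ∈ U, f z = g z * (Z.map (fun z0 => z - z0)).prod) :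
    (∮ z in C(0, r),
        deriv (fun w => f w /
          ((Z.filter (fun z0 => ‖z0‖ = r)).map (fun z0 => w - z0)).prod) z /
        (f z / ((Z.filter (fun z0 => ‖z0‖ = r)).map (fun z0 => z - z0)).prod))
      = ∮ z in C(0, r),
          deriv (fun w => g w *
            ((Z.filter (fun z0 => ¬ ‖z0‖ = r)).map (fun z0 => w - z0)).prod) z /
          (g z * ((Z.filter (fun z0 => ¬ ‖z0‖ = r)).map (fun z0 => z - z0)).prod) := by
  have hTc : ({w : ℂ | w ∈ Z.filter (fun z0 => ‖z0‖ = r)} : Set ℂ).Countable :=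
    (Z.filter (fun z0 => ‖z0‖ = r)).finite_toSet.countable
  refine circleIntegral_congr_off_countable' hr hTc ?_
  intro z hz hzT
  have hzU : z ∈ U := hsub hz
  have hPz : ((Z.filter (fun z0 => ‖z0‖ = r)).map (fun z0 => z - z0)).prod ≠ 0 := by
    refine Multiset.prod_ne_zero ?_
    intro h0
    obtain ⟨z0, hz0, hzz⟩ := Multiset.mem_map.1 h0
    exact hzT (by rw [Set.mem_setOf_eq, sub_eq_zero.1 hzz]; exact hz0)
  have hVopen : IsOpen (U ∩ {w : ℂ |
      ((Z.filter (fun z0 => ‖z0‖ = r)).map (fun z0 => w - z0)).prod ≠ 0}) := by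
    refine hU.inter ?_
    have hc : Continuous (fun w : ℂ =>
        ((Z.filter (fun z0 => ‖z0‖ = r)).map (fun z0 => w - z0)).prod) :=
      (prod_diff' _).continuous
    exact isOpen_compl_singleton.preimage hc
  have hev : (fun w => f w /
        ((Z.filter (fun z0 => ‖z0‖ = r)).map (fun z0 => w - z0)).prod)
      =ᶠ[nhds z] (fun w => g w *
        ((Z.filter (fun z0 => ¬ ‖z0‖ = r)).map (fun z0 => w - z0)).prod) := by
    refine Filter.eventuallyEq_of_mem (hVopen.mem_nhds ⟨hzU, hPz⟩) ?_
    intro w hw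
    have hsplit : (Z.map (fun z0 => w - z0)).prod
        = ((Z.filter (fun z0 => ‖z0‖ = r)).map (fun z0 => w - z0)).prod *
          ((Z.filter (fun z0 => ¬ ‖z0‖ = r)).map (fun z0 => w - z0)).prod := by
      conv_lhs => rw [← Multiset.filter_add_not (fun z0 => ‖z0‖ = r) Z]
      rw [Multiset.map_add, Multiset.prod_add]
    have hPw : ((Z.filter (fun z0 => ‖z0‖ = r)).map (fun z0 => w - z0)).prod ≠ 0 :=
      hw.2
    simp only []
    rw [hfact w hw.1, hsplit]
    field_simp
  rw [hev.deriv_eq]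
  congr 1
  exact hev.eq_of_nhds

private lemma card_filter_or' {α : Type*} (s : Multiset α) (p q : α → Prop)
    [DecidablePred p] [DecidablePred q] [DecidablePred fun a => p a ∨ q a]
    (h : ∀ a ∈ s, ¬(p a ∧ q a)) :
    (s.filter fun a => p a ∨ q a).card = (s.filter p).card + (s.filter q).card := by
  induction s using Multiset.induction with
  | empty => simp
  | cons a s ih =>
    have ha := h a (Multiset.mem_cons_self a s)
    have ih' := ih fun b hb => h b (Multiset.mem_cons_of_mem hb)
    by_cases hp : p a <;> by_cases hq : q a <;>
      simp [Multiset.filter_cons, hp, hq, ih'] <;> first | omega | exact absurd ⟨hp, hq⟩ ha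

/-- The principal value of `(1/2πi)∮_{|z|=r} f'(z)/f(z) dz`, for a function `f` whose
zeros (with multiplicity) are listed in the multiset `Z`:  it equals the ordinary
contour integral of `g'/g`, where `g` is `f` with the zeros on the circle `|z| = r`
divided out, plus one half of the number of zeros on that circle. -/
noncomputable def pvLogDerivIntegral (f : ℂ → ℂ) (Z : Multiset ℂ) (r : ℝ) : ℂ :=
  (2 * Real.pi * Complex.I)⁻¹ •
      (∮ z in C(0, r),
        deriv (fun w => f w /
          ((Z.filter (fun z0 => ‖z0‖ = r)).map (fun z0 => w - z0)).prod) z /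
        (f z / ((Z.filter (fun z0 => ‖z0‖ = r)).map (fun z0 => z - z0)).prod))
    + ((Z.filter (fun z0 => ‖z0‖ = r)).card : ℂ) / 2

/-- **Principal value argument principle on the annulus.**  Let `0 < r₁ < r₂` and let
`f` be holomorphic on an open neighborhood `U` of the closed annulus, not identically
zero: `f = g · ∏ᵢ(· - zᵢ)` with `g` holomorphic and nonvanishing covering `U` and `Z` the
multiset of zeros of `f` in the closed annulus. -/
theorem pv_argument_principle_annulus (r₁ r₂ : ℝ) (hr₁ : 0 < r₁) (hr₁₂ : r₁ < r₂)
    (U : Set ℂ) (hU : IsOpen U)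
    (hUann : {z : ℂ | r₁ ≤ ‖z‖ ∧ ‖z‖ ≤ r₂} ⊆ U)
    (f g : ℂ → ℂ) (Z : Multiset ℂ)
    (hf : DifferentiableOn ℂ f U) (hg : DifferentiableOn ℂ g U)
    (hgne : ∀ z ∈ U, g z ≠ 0)
    (hZmem : ∀ z ∈ Z, r₁ ≤ ‖z‖ ∧ ‖z‖ ≤ r₂)
    (hfact : ∀ z ∈ U, f z = g z * (Z.map (fun z0 => z - z0)).prod) :
    pvLogDerivIntegral f Z r₂ - pvLogDerivIntegral f Z r₁
      = ((Z.filter (fun z0 => r₁ < ‖z0‖ ∧ ‖z0‖ < r₂)).card : ℂ)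
        + ((Z.filter (fun z0 => ‖z0‖ = r₁ ∨ ‖z0‖ = r₂)).card : ℂ) / 2 := by
  have hr₂ : 0 < r₂ := hr₁.trans hr₁₂
  have hs1 : Metric.sphere (0:ℂ) r₁ ⊆ U := by
    intro z hz
    have : ‖z‖ = r₁ := by
      simpa using mem_sphere_zero_iff_norm.1 hz
    exact hUann ⟨this.ge, this ▸ hr₁₂.le⟩
  have hs2 : Metric.sphere (0:ℂ) r₂ ⊆ U := by
    intro z hz
    have : ‖z‖ = r₂ := by
      simpa using mem_sphere_zero_iff_norm.1 hz
    exact hUann ⟨by rw [this]; exact hr₁₂.le, this.le⟩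
  -- the `g'/g` integrals over the two circles agree
  have hGd : DifferentiableOn ℂ (fun z => deriv g z / g z) U :=
    ((hg.analyticOnNhd hU).deriv.differentiableOn).div hg hgne
  have hannU : Metric.closedBall (0:ℂ) r₂ \ Metric.ball 0 r₁ ⊆ U := by
    intro z hz
    refine hUann ⟨?_, ?_⟩
    · have := hz.2
      rw [mem_ball_zero_iff] at this
      exact not_lt.1 this
    · have := hz.1
      rw [Metric.mem_closedBall, Complex.dist_eq, sub_zero] at this
      exact this
  have hGann : (∮ z in C(0, r₂), deriv g z / g z) = ∮ z in C(0, r₁), deriv g z / g z := by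
    refine Complex.circleIntegral_eq_of_differentiable_on_annulus_off_countable hr₁ hr₁₂.le
      Set.countable_empty ((hGd.continuousOn).mono hannU) ?_
    intro z hz
    have hzU : z ∈ U := hannU ⟨Metric.ball_subset_closedBall hz.1.1,
      fun hb => hz.1.2 (Metric.ball_subset_closedBall hb)⟩
    exact hGd.differentiableAt (hU.mem_nhds hzU)
  -- evaluate the two principal value integrals
  have hmemS2 : ∀ z0 ∈ Z.filter (fun z0 => ¬ ‖z0‖ = r₂), ‖z0‖ ≠ r₂ :=
    fun z0 hz0 => (Multiset.mem_filter.1 hz0).2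
  have hmemS1 : ∀ z0 ∈ Z.filter (fun z0 => ¬ ‖z0‖ = r₁), ‖z0‖ ≠ r₁ :=
    fun z0 hz0 => (Multiset.mem_filter.1 hz0).2
  -- main rewriting
  have E2 : (∮ z in C(0, r₂),
        deriv (fun w => f w /
          ((Z.filter (fun z0 => ‖z0‖ = r₂)).map (fun z0 => w - z0)).prod) z /
        (f z / ((Z.filter (fun z0 => ‖z0‖ = r₂)).map (fun z0 => z - z0)).prod))
      = (∮ z in C(0, r₂), deriv g z / g z)
        + (2 * Real.pi * Complex.I) *
          (((Z.filter (fun z0 => ¬ ‖z0‖ = r₂)).filter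
            (fun z0 => ‖z0‖ < r₂)).card : ℂ) := by
    rw [pv_integral_eq' r₂ hr₂ U hU hs2 f g Z hfact]
    exact key_induction' r₂ hr₂ U hU hs2 g hg hgne _ hmemS2
  have E1 : (∮ z in C(0, r₁),
        deriv (fun w => f w /
          ((Z.filter (fun z0 => ‖z0‖ = r₁)).map (fun z0 => w - z0)).prod) z /
        (f z / ((Z.filter (fun z0 => ‖z0‖ = r₁)).map (fun z0 => z - z0)).prod))
      = (∮ z in C(0, r₁), deriv g z / g z)
        + (2 * Real.pi * Complex.I) *
          (((Z.filter (fun z0 => ¬ ‖z0‖ = r₁)).filter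
            (fun z0 => ‖z0‖ < r₁)).card : ℂ) := by
    rw [pv_integral_eq' r₁ hr₁ U hU hs1 f g Z hfact]
    exact key_induction' r₁ hr₁ U hU hs1 g hg hgne _ hmemS1
  -- counting lemmas
  have hN1 : ((Z.filter (fun z0 => ¬ ‖z0‖ = r₁)).filter
      (fun z0 => ‖z0‖ < r₁)).card = 0 := by
    rw [Multiset.card_eq_zero, Multiset.filter_eq_nil]
    intro a ha
    exact not_lt.2 (hZmem a (Multiset.mem_of_mem_filter ha)).1
  have hN2 : ((Z.filter (fun z0 => ¬ ‖z0‖ = r₂)).filter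
        (fun z0 => ‖z0‖ < r₂)).card
      = (Z.filter (fun z0 => r₁ < ‖z0‖ ∧ ‖z0‖ < r₂)).card
        + (Z.filter (fun z0 => ‖z0‖ = r₁)).card := by
    rw [Multiset.filter_filter]
    have heq : Multiset.filter (fun a => ‖a‖ < r₂ ∧ ¬ ‖a‖ = r₂) Z
        = Multiset.filter
            (fun a => (r₁ < ‖a‖ ∧ ‖a‖ < r₂) ∨ ‖a‖ = r₁) Z := by
      refine Multiset.filter_congr (fun a ha => ?_)
      have h1 := (hZmem a ha).1
      constructor
      · rintro ⟨hlt, -⟩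
        rcases h1.eq_or_lt with he | hl
        · exact Or.inr he.symm
        · exact Or.inl ⟨hl, hlt⟩
      · rintro (⟨-, hlt⟩ | he)
        · exact ⟨hlt, ne_of_lt hlt⟩
        · rw [he]; exact ⟨hr₁₂, ne_of_lt hr₁₂⟩
    rw [heq]
    refine card_filter_or' Z _ _ ?_
    rintro a ha ⟨⟨hgt, -⟩, he⟩
    rw [he] at hgt
    exact lt_irrefl _ hgt
  have hB : (Z.filter (fun z0 => ‖z0‖ = r₁ ∨ ‖z0‖ = r₂)).card
      = (Z.filter (fun z0 => ‖z0‖ = r₁)).card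
        + (Z.filter (fun z0 => ‖z0‖ = r₂)).card := by
    refine card_filter_or' Z _ _ ?_
    rintro a ha ⟨h1, h2⟩
    rw [h1] at h2
    exact hr₁₂.ne h2
  have hπ : (2 * (Real.pi:ℂ) * Complex.I) ≠ 0 := Complex.two_pi_I_ne_zero
  unfold pvLogDerivIntegral
  rw [E2, E1, hGann, hN1, hN2, hB]
  push_cast
  rw [smul_eq_mul, smul_eq_mul]
  field_simp
  ring
end

section
/- Let M ∈ SL(2,ℂ), let e₁, e₂ be the standard basis of ℂ², and let u⁺, u⁻, v⁺, v⁻ be unit vectors with M u⁺ = ‖M‖ v⁺, M u⁻ = ‖M‖^{−1} v⁻ and |u⁺ ∧ u⁻| = |v⁺ ∧ v⁻| = 1. Then |M e₁ ∧ e₂| ≥ ‖M‖·|u⁻ ∧ e₁|·|v⁺ ∧ e₂| − ‖M‖^{−1}·|u⁺ ∧ e₁|·|v⁻ ∧ e₂|. -/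
/-- The wedge product `a ∧ b` of two vectors in `ℂ²`: the determinant of the `2×2`
matrix with columns `a` and `b`. -/
noncomputable def wedge (a b : EuclideanSpace ℂ (Fin 2)) : ℂ :=
  a 0 * b 1 - a 1 * b 0

/-- **Entry lower bound from singular directions.**  For `M ∈ SL(2,ℂ)` with singular
directions `u⁺, u⁻, v⁺, v⁻` (unit vectors with `M u⁺ = ‖M‖ v⁺`, `M u⁻ = ‖M‖⁻¹ v⁻`,
`|u⁺ ∧ u⁻| = |v⁺ ∧ v⁻| = 1`), and standard basis vectors `e₁, e₂`,
`|M e₁ ∧ e₂| ≥ ‖M‖·|u⁻ ∧ e₁|·|v⁺ ∧ e₂| − ‖M‖⁻¹·|u⁺ ∧ e₁|·|v⁻ ∧ e₂|`. -/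
theorem entry_lower_bound
    (M : EuclideanSpace ℂ (Fin 2) →L[ℂ] EuclideanSpace ℂ (Fin 2))
    (hdet : LinearMap.det (M : EuclideanSpace ℂ (Fin 2) →ₗ[ℂ] EuclideanSpace ℂ (Fin 2)) = 1)
    (up um vp vm : EuclideanSpace ℂ (Fin 2))
    (hup : ‖up‖ = 1) (hum : ‖um‖ = 1) (hvp : ‖vp‖ = 1) (hvm : ‖vm‖ = 1)
    (hMup : M up = ‖M‖ • vp) (hMum : M um = ‖M‖⁻¹ • vm)
    (hu : ‖wedge up um‖ = 1) (hv : ‖wedge vp vm‖ = 1) :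
    ‖M‖ * ‖wedge um (EuclideanSpace.single 0 1)‖
          * ‖wedge vp (EuclideanSpace.single 1 1)‖
        - ‖M‖⁻¹ * ‖wedge up (EuclideanSpace.single 0 1)‖
          * ‖wedge vm (EuclideanSpace.single 1 1)‖
      ≤ ‖wedge (M (EuclideanSpace.single 0 1)) (EuclideanSpace.single 1 1)‖ := by
  set w : ℂ := wedge up um with hwdef
  have hw0 : w ≠ 0 := by
    intro h; rw [h] at hu; simp at hu
  have hne : up 0 * um 1 - up 1 * um 0 ≠ 0 := by
    simpa [hwdef, wedge] using hw0
  -- decompose e₁ in the basis up, um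
  have he1 : (EuclideanSpace.single 0 1 : EuclideanSpace ℂ (Fin 2))
      = (um 1 / w) • up + (-(up 1) / w) • um := by
    ext i
    fin_cases i <;>
      · simp only [EuclideanSpace.single_apply, PiLp.add_apply, PiLp.smul_apply, smul_eq_mul,
          hwdef, wedge]
        simp
        have hne' : um 1 * up 0 - up 1 * um 0 ≠ 0 := by rw [mul_comm]; exact hne
        field_simp
        ring
  have hMe1 : M (EuclideanSpace.single 0 1)
      = (um 1 / w) • ((‖M‖ : ℂ) • vp) + (-(up 1) / w) • ((‖M‖⁻¹ : ℂ) • vm) := by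
    rw [he1, map_add, map_smul, map_smul, hMup, hMum]
    norm_cast
  -- compute the relevant wedges explicitly
  have key : M (EuclideanSpace.single 0 1) 0
      = (um 1 / w) * ((‖M‖ : ℂ) * vp 0) + (-(up 1) / w) * ((‖M‖⁻¹ : ℂ) * vm 0) := by
    rw [hMe1]
    simp [PiLp.add_apply, PiLp.smul_apply, smul_eq_mul]
  have habs : ∀ x : EuclideanSpace ℂ (Fin 2),
      ‖wedge x (EuclideanSpace.single 1 1)‖ = ‖x 0‖ := by
    intro x; simp [wedge, EuclideanSpace.single_apply]
  have habs' : ∀ x : EuclideanSpace ℂ (Fin 2),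
      ‖wedge x (EuclideanSpace.single 0 1)‖ = ‖x 1‖ := by
    intro x; simp [wedge, EuclideanSpace.single_apply]
  rw [habs, habs, habs, habs', habs', key]
  have h1 : ‖(um 1 / w) * ((‖M‖ : ℂ) * vp 0)‖
      = ‖M‖ * ‖um 1‖ * ‖vp 0‖ := by
    simp [norm_mul, norm_div, hu, Complex.norm_real, abs_of_nonneg (norm_nonneg M)]
    ring
  have h2 : ‖(-(up 1) / w) * ((‖M‖⁻¹ : ℂ) * vm 0)‖
      = ‖M‖⁻¹ * ‖up 1‖ * ‖vm 0‖ := by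
    simp [norm_mul, norm_div, hu, Complex.norm_real, abs_of_nonneg (norm_nonneg M)]
    ring
  calc ‖M‖ * ‖um 1‖ * ‖vp 0‖
        - ‖M‖⁻¹ * ‖up 1‖ * ‖vm 0‖
      = ‖(um 1 / w) * ((‖M‖ : ℂ) * vp 0)‖
        - ‖(-(up 1) / w) * ((‖M‖⁻¹ : ℂ) * vm 0)‖ := by rw [h1, h2]
    _ ≤ ‖(um 1 / w) * ((‖M‖ : ℂ) * vp 0)
        + (-(up 1) / w) * ((‖M‖⁻¹ : ℂ) * vm 0)‖ := by
        set X := (um 1 / w) * ((‖M‖ : ℂ) * vp 0)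
        set Y := (-(up 1) / w) * ((‖M‖⁻¹ : ℂ) * vm 0)
        have h := norm_add_le (X + Y) (-Y)
        rw [norm_neg] at h; simp only [add_neg_cancel_right] at h
        linarith
end
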